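/- The Banach lattice c₀ does not have the Brezis–Lieb property: there exist a disjoint normalized sequence (uₙ) in c₀₊ and u₀ > 0 with limsup ‖u₀ + uₙ‖ = ‖u₀‖. -/

import Mathlib

open Filter Topology MeasureTheory
open scoped ZeroAtInfty

/-- Order convergence of a net (indexed by a preordered type) in a lattice-ordered group:
there is a net decreasing to `0` eventually dominating `|x α - x₀|`. -/
def OrderConvNet {E : Type*} [Lattice E] [AddCommGroup E] {ι : Type*} [Preorder ι]
    (x : ι → E) (x₀ : E) : Prop :=
  ∃ z : ι → E, Antitone z ∧ IsGLB (Set.range z) 0 ∧ ∀ᶠ α in atTop, |x α - x₀| ≤ z α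

/-- Unbounded order convergence of a net. -/
def UOConvNet {E : Type*} [Lattice E] [AddCommGroup E] {ι : Type*} [Preorder ι]
    (x : ι → E) (x₀ : E) : Prop :=
  ∀ u : E, 0 ≤ u → OrderConvNet (fun α => |x α - x₀| ⊓ u) 0

/-- A normed lattice is a Brezis–Lieb space if `uo`-convergence together with convergence
of norms implies norm convergence, for all nets. -/
def IsBLSpace (E : Type*) [NormedAddCommGroup E] [Lattice E] : Prop :=
  ∀ (ι : Type) [Preorder ι] [IsDirected ι (· ≤ ·)] [Nonempty ι],
    ∀ (x : ι → E) (x₀ : E), UOConvNet x x₀ →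
      Tendsto (fun α => ‖x α‖) atTop (𝓝 ‖x₀‖) →
      Tendsto (fun α => ‖x α - x₀‖) atTop (𝓝 0)

/-- σ-Brezis–Lieb space: the same for sequences. -/
def IsSigmaBLSpace (E : Type*) [NormedAddCommGroup E] [Lattice E] : Prop :=
  ∀ (x : ℕ → E) (x₀ : E), UOConvNet x x₀ →
    Tendsto (fun n => ‖x n‖) atTop (𝓝 ‖x₀‖) →
    Tendsto (fun n => ‖x n - x₀‖) atTop (𝓝 0)

/-- The Brezis–Lieb property of a normed lattice. -/
def HasBLProperty (E : Type*) [NormedAddCommGroup E] [Lattice E] : Prop :=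
  ∀ (u : ℕ → E) (u₀ : E), (∀ n, 0 ≤ u n) → (∀ n, ‖u n‖ = 1) →
    (Pairwise fun n m => u n ⊓ u m = 0) → 0 < u₀ →
    ‖u₀‖ < limsup (fun n => ‖u₀ + u n‖) atTop

/-- The norm is order continuous: every net decreasing to `0` converges to `0` in norm. -/
def HasOrderContinuousNorm (E : Type*) [NormedAddCommGroup E] [Lattice E] : Prop :=
  ∀ (ι : Type) [Preorder ι] [IsDirected ι (· ≤ ·)] [Nonempty ι],
    ∀ x : ι → E, Antitone x → IsGLB (Set.range x) 0 →
      Tendsto (fun α => ‖x α‖) atTop (𝓝 0)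

/-- σ-Dedekind completeness: every order bounded sequence has a supremum. -/
def SigmaDedekindComplete (E : Type*) [Lattice E] : Prop :=
  ∀ (f : ℕ → E) (b : E), (∀ n, f n ≤ b) → ∃ s, IsLUB (Set.range f) s

open ZeroAtInftyContinuousMap in
noncomputable instance : Max C₀(ℕ, ℝ) :=
  ⟨fun f g =>
    { toFun := fun n => f n ⊔ g n
      continuous_toFun := continuous_of_discreteTopology
      zero_at_infty' := by simpa using (zero_at_infty f).max (zero_at_infty g) }⟩

open ZeroAtInftyContinuousMap in
noncomputable instance : Min C₀(ℕ, ℝ) :=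
  ⟨fun f g =>
    { toFun := fun n => f n ⊓ g n
      continuous_toFun := continuous_of_discreteTopology
      zero_at_infty' := by simpa using (zero_at_infty f).min (zero_at_infty g) }⟩

instance : LE C₀(ℕ, ℝ) :=
  ⟨fun f g => (f : ℕ → ℝ) ≤ g⟩

instance : LT C₀(ℕ, ℝ) :=
  ⟨fun f g => (f : ℕ → ℝ) < g⟩

/-- The pointwise lattice structure on `c₀ = C₀(ℕ, ℝ)`. -/
noncomputable instance : Lattice C₀(ℕ, ℝ) :=
  DFunLike.coe_injective.lattice _ Iff.rfl Iff.rfl (fun _ _ => rfl) (fun _ _ => rfl)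


open ZeroAtInftyContinuousMap in
/-- The `k`-th standard basis vector of `c₀`. -/
noncomputable def c0e (k : ℕ) : C₀(ℕ, ℝ) where
  toFun := fun n => if n = k then 1 else 0
  continuous_toFun := continuous_of_discreteTopology
  zero_at_infty' := by
    refine Tendsto.congr' ?_ tendsto_const_nhds
    filter_upwards [(isCompact_singleton (x := k)).compl_mem_cocompact] with n hn
    simp only [Set.mem_compl_iff, Set.mem_singleton_iff] at hn
    simp [hn]

lemma c0e_apply (k n : ℕ) : c0e k n = if n = k then 1 else 0 := rfl

lemma c0e_nonneg (k : ℕ) : (0 : C₀(ℕ, ℝ)) ≤ c0e k := by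
  show ∀ n, (0 : C₀(ℕ, ℝ)) n ≤ c0e k n
  intro n
  simp only [c0e_apply]
  split <;> norm_num

lemma norm_le_of_forall {f : C₀(ℕ, ℝ)} {C : ℝ} (h0 : 0 ≤ C) (h : ∀ n, |f n| ≤ C) :
    ‖f‖ ≤ C := by
  rw [← ZeroAtInftyContinuousMap.norm_toBCF_eq_norm]
  exact BoundedContinuousFunction.norm_le h0 |>.mpr fun n => by
    simpa [Real.norm_eq_abs] using h n

lemma abs_apply_le_norm (f : C₀(ℕ, ℝ)) (n : ℕ) : |f n| ≤ ‖f‖ := by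
  rw [← ZeroAtInftyContinuousMap.norm_toBCF_eq_norm]
  simpa [Real.norm_eq_abs] using f.toBCF.norm_coe_le_norm n

lemma norm_c0e_add (j k : ℕ) (hjk : j ≠ k) : ‖c0e j + c0e k‖ = 1 := by
  refine le_antisymm ?_ ?_
  · refine norm_le_of_forall zero_le_one fun n => ?_
    have : (c0e j + c0e k) n = c0e j n + c0e k n := rfl
    rw [this]
    simp only [c0e_apply]
    rcases eq_or_ne n j with h | h <;> rcases eq_or_ne n k with h' | h' <;>
      first | (exfalso; exact hjk (h ▸ h'.symm ▸ rfl)) | simp [h, h', hjk, hjk.symm, Ne.symm hjk]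
  · have h := abs_apply_le_norm (c0e j + c0e k) j
    have hj : (c0e j + c0e k) j = 1 + c0e k j := by
      show c0e j j + c0e k j = _
      simp [c0e_apply]
    rw [hj] at h
    have hk : (0:ℝ) ≤ c0e k j := by simp only [c0e_apply]; split <;> norm_num
    calc (1:ℝ) ≤ |1 + c0e k j| := by rw [abs_of_nonneg (by linarith)]; linarith
    _ ≤ _ := h

lemma norm_c0e (k : ℕ) : ‖c0e k‖ = 1 := by
  refine le_antisymm ?_ ?_
  · refine norm_le_of_forall zero_le_one fun n => ?_
    simp only [c0e_apply]; split <;> norm_num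
  · have h := abs_apply_le_norm (c0e k) k
    simpa [c0e_apply] using h

/-- The Banach lattice `c₀` (here `C₀(ℕ, ℝ)`) does not have the Brezis–Lieb property:
there are a disjoint normalized sequence `(uₙ)` of positive elements and `u₀ > 0` with
`limsup ‖u₀ + uₙ‖ = ‖u₀‖`. -/
theorem c0_not_hasBLProperty :
    ¬ HasBLProperty C₀(ℕ, ℝ) ∧
      ∃ (u : ℕ → C₀(ℕ, ℝ)) (u₀ : C₀(ℕ, ℝ)),
        (∀ n, 0 ≤ u n) ∧ (∀ n, ‖u n‖ = 1) ∧ (Pairwise fun n m => u n ⊓ u m = 0) ∧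
        0 < u₀ ∧ limsup (fun n => ‖u₀ + u n‖) atTop = ‖u₀‖ := by
  set u : ℕ → C₀(ℕ, ℝ) := fun n => c0e (n + 1) with hu
  set u₀ : C₀(ℕ, ℝ) := c0e 0 with hu₀
  have hnn : ∀ n, 0 ≤ u n := fun n => c0e_nonneg _
  have hnorm : ∀ n, ‖u n‖ = 1 := fun n => norm_c0e _
  have hdisj : Pairwise fun n m => u n ⊓ u m = 0 := by
    intro n m hnm
    ext j
    show c0e (n+1) j ⊓ c0e (m+1) j = 0
    simp only [c0e_apply]
    rcases eq_or_ne j (n+1) with h | h <;> rcases eq_or_ne j (m+1) with h' | h'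
    · omega
    · simp [h, h', hnm]
    · simp [h, h', hnm.symm]
    · simp [h, h']
  have hpos : 0 < u₀ := by
    refine lt_of_le_of_ne (c0e_nonneg 0) fun h => ?_
    have := congrArg (fun f : C₀(ℕ, ℝ) => f 0) h
    rw [hu₀] at this
    simp only [c0e_apply, if_pos rfl] at this
    exact zero_ne_one (α := ℝ) this
  have hconst : ∀ n, ‖u₀ + u n‖ = 1 := fun n => norm_c0e_add 0 (n + 1) (by omega)
  have hlimsup : limsup (fun n => ‖u₀ + u n‖) atTop = ‖u₀‖ := by
    rw [norm_c0e]
    simp only [hconst]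
    exact limsup_const 1
  refine ⟨fun hBL => ?_, u, u₀, hnn, hnorm, hdisj, hpos, hlimsup⟩
  have := hBL u u₀ hnn hnorm hdisj hpos
  rw [hlimsup] at this
  exact lt_irrefl _ this
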